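/- Let f : [0,∞) → ℝ be continuous and define n : ℝ³∖{0} → ℝ³ by n₁ = −(x₂/r) sin f(r) + (x₁x₃/r²)(1 − cos f(r)), n₂ = (x₁/r) sin f(r) + (x₂x₃/r²)(1 − cos f(r)), n₃ = cos f(r) + (x₃²/r²)(1 − cos f(r)), where r = |x|. Then n extends to a continuous map on all of ℝ³ (equivalently, the limit of n(x) as x → 0 exists and is independent of the direction of approach) if and only if f(0) ∈ 2πℤ; and in that case the limit equals (0,0,1). -/

import Mathlib

/-- The radius `r = |x|` of a point `x ∈ ℝ³`. -/
noncomputable def rad (x : Fin 3 → ℝ) : ℝ := Real.sqrt (∑ i, x i ^ 2)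

lemma rad_nonneg' (x : Fin 3 → ℝ) : 0 ≤ rad x := Real.sqrt_nonneg _

lemma abs_le_rad (x : Fin 3 → ℝ) (i : Fin 3) : |x i| ≤ rad x := by
  rw [← Real.sqrt_sq_eq_abs]
  exact Real.sqrt_le_sqrt
    (Finset.single_le_sum (f := fun j => x j ^ 2) (fun j _ => sq_nonneg _) (Finset.mem_univ i))

lemma rad_pos (x : Fin 3 → ℝ) (hx : x ≠ 0) : 0 < rad x := by
  obtain ⟨i, hi⟩ := Function.ne_iff.mp hx
  apply Real.sqrt_pos.mpr
  exact Finset.sum_pos' (fun j _ => sq_nonneg _)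
    ⟨i, Finset.mem_univ i, by simpa using pow_pos (abs_pos.mpr hi) 2⟩

lemma continuous_rad : Continuous rad :=
  Real.continuous_sqrt.comp (continuous_finset_sum _ (fun i _ => (continuous_apply i).pow 2))

lemma rad_zero' : rad 0 = 0 := by simp [rad]

/-- the disclination field `n` (built from `f` and the boundary vector
`n₀ = (0,0,1)`) has a direction-independent limit at the origin — equivalently, it
extends continuously to all of `ℝ³` — if and only if `f 0 ∈ 2πℤ`, and in that case the
limit is `(0,0,1)`.  (The coordinates `x₁, x₂, x₃` are `x 0, x 1, x 2`.) -/
theorem stmt12 (f : ℝ → ℝ) (hf : ContinuousOn f (Set.Ici 0))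
    (n : (Fin 3 → ℝ) → Fin 3 → ℝ)
    (hn : ∀ x : Fin 3 → ℝ, x ≠ 0 →
      n x 0 = -(x 1 / rad x) * Real.sin (f (rad x)) +
        x 0 * x 2 / rad x ^ 2 * (1 - Real.cos (f (rad x))) ∧
      n x 1 = x 0 / rad x * Real.sin (f (rad x)) +
        x 1 * x 2 / rad x ^ 2 * (1 - Real.cos (f (rad x))) ∧
      n x 2 = Real.cos (f (rad x)) +
        x 2 ^ 2 / rad x ^ 2 * (1 - Real.cos (f (rad x)))) :
    ((∃ L : Fin 3 → ℝ,
        Filter.Tendsto n (nhdsWithin 0 {(0 : Fin 3 → ℝ)}ᶜ) (nhds L)) ↔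
      ∃ k : ℤ, f 0 = 2 * Real.pi * (k : ℝ)) ∧
    ((∃ k : ℤ, f 0 = 2 * Real.pi * (k : ℝ)) →
      Filter.Tendsto n (nhdsWithin 0 {(0 : Fin 3 → ℝ)}ᶜ)
        (nhds fun i => if i = 2 then (1 : ℝ) else 0)) := by
  have hf0 : Filter.Tendsto f (nhdsWithin 0 (Set.Ici 0)) (nhds (f 0)) := hf 0 Set.self_mem_Ici
  have hradt : Filter.Tendsto rad (nhdsWithin 0 {(0 : Fin 3 → ℝ)}ᶜ)
      (nhdsWithin 0 (Set.Ici 0)) := by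
    rw [tendsto_nhdsWithin_iff]
    refine ⟨?_, Filter.Eventually.of_forall fun x => rad_nonneg' x⟩
    have := continuous_rad.tendsto 0
    rw [rad_zero'] at this
    exact this.mono_left nhdsWithin_le_nhds
  have hfr : Filter.Tendsto (fun x => f (rad x)) (nhdsWithin 0 {(0 : Fin 3 → ℝ)}ᶜ)
      (nhds (f 0)) := hf0.comp hradt
  have hev : ∀ᶠ x in nhdsWithin 0 {(0 : Fin 3 → ℝ)}ᶜ, x ≠ 0 :=
    eventually_mem_nhdsWithin.mono (fun x hx => hx)
  -- the "if" part
  have key : (∃ k : ℤ, f 0 = 2 * Real.pi * (k : ℝ)) →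
      Filter.Tendsto n (nhdsWithin 0 {(0 : Fin 3 → ℝ)}ᶜ)
        (nhds fun i => if i = 2 then (1 : ℝ) else 0) := by
    rintro ⟨k, hk⟩
    have hsin : Real.sin (f 0) = 0 := by
      rw [hk]
      have : 2 * Real.pi * (k : ℝ) = ((2 * k : ℤ) : ℝ) * Real.pi := by push_cast; ring
      rw [this, Real.sin_int_mul_pi]
    have hcos : Real.cos (f 0) = 1 := by
      rw [hk]
      have : 2 * Real.pi * (k : ℝ) = ((k : ℤ) : ℝ) * (2 * Real.pi) := by push_cast; ring
      rw [this, Real.cos_int_mul_two_pi]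
    have hs : Filter.Tendsto (fun x => Real.sin (f (rad x)))
        (nhdsWithin 0 {(0 : Fin 3 → ℝ)}ᶜ) (nhds 0) := by
      have := (Real.continuous_sin.tendsto (f 0)).comp hfr
      rwa [hsin] at this
    have hc : Filter.Tendsto (fun x => 1 - Real.cos (f (rad x)))
        (nhdsWithin 0 {(0 : Fin 3 → ℝ)}ᶜ) (nhds 0) := by
      have := ((Real.continuous_cos.tendsto (f 0)).comp hfr).const_sub 1
      rwa [hcos, sub_self] at this
    have hdiv : ∀ (x : Fin 3 → ℝ), x ≠ 0 → ∀ i : Fin 3, |x i / rad x| ≤ 1 := by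
      intro x hx i
      have hr := rad_pos x hx
      rw [abs_div, abs_of_pos hr, div_le_one hr]
      exact abs_le_rad x i
    have hdiv2 : ∀ (x : Fin 3 → ℝ), x ≠ 0 → ∀ i j : Fin 3,
        |x i * x j / rad x ^ 2| ≤ 1 := by
      intro x hx i j
      have hr := rad_pos x hx
      rw [abs_div, abs_mul, abs_pow, abs_of_pos hr, div_le_one (by positivity)]
      calc |x i| * |x j| ≤ rad x * rad x :=
            mul_le_mul (abs_le_rad x i) (abs_le_rad x j) (abs_nonneg _) (rad_nonneg' x)
        _ = rad x ^ 2 := (sq (rad x)).symm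
    have hsum : Filter.Tendsto
        (fun x => |Real.sin (f (rad x))| + |1 - Real.cos (f (rad x))|)
        (nhdsWithin 0 {(0 : Fin 3 → ℝ)}ᶜ) (nhds 0) := by
      have := hs.abs.add hc.abs
      simpa using this
    rw [tendsto_pi_nhds]
    intro i
    fin_cases i
    · -- coordinate 0
      have h0 : Filter.Tendsto (fun x => n x 0) (nhdsWithin 0 {(0 : Fin 3 → ℝ)}ᶜ)
          (nhds 0) := by
        apply squeeze_zero_norm' _ hsum
        filter_upwards [hev] with x hx
        rw [Real.norm_eq_abs, (hn x hx).1]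
        calc |(-(x 1 / rad x)) * Real.sin (f (rad x)) +
              x 0 * x 2 / rad x ^ 2 * (1 - Real.cos (f (rad x)))|
            ≤ |(-(x 1 / rad x)) * Real.sin (f (rad x))| +
              |x 0 * x 2 / rad x ^ 2 * (1 - Real.cos (f (rad x)))| := abs_add_le _ _
          _ = |x 1 / rad x| * |Real.sin (f (rad x))| +
              |x 0 * x 2 / rad x ^ 2| * |1 - Real.cos (f (rad x))| := by
                rw [abs_mul, abs_mul, abs_neg]
          _ ≤ 1 * |Real.sin (f (rad x))| + 1 * |1 - Real.cos (f (rad x))| :=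
              add_le_add (mul_le_mul_of_nonneg_right (hdiv x hx 1) (abs_nonneg _))
                (mul_le_mul_of_nonneg_right (hdiv2 x hx 0 2) (abs_nonneg _))
          _ = |Real.sin (f (rad x))| + |1 - Real.cos (f (rad x))| := by ring
      simpa using h0
    · -- coordinate 1
      have h1 : Filter.Tendsto (fun x => n x 1) (nhdsWithin 0 {(0 : Fin 3 → ℝ)}ᶜ)
          (nhds 0) := by
        apply squeeze_zero_norm' _ hsum
        filter_upwards [hev] with x hx
        rw [Real.norm_eq_abs, (hn x hx).2.1]
        calc |x 0 / rad x * Real.sin (f (rad x)) +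
              x 1 * x 2 / rad x ^ 2 * (1 - Real.cos (f (rad x)))|
            ≤ |x 0 / rad x * Real.sin (f (rad x))| +
              |x 1 * x 2 / rad x ^ 2 * (1 - Real.cos (f (rad x)))| := abs_add_le _ _
          _ = |x 0 / rad x| * |Real.sin (f (rad x))| +
              |x 1 * x 2 / rad x ^ 2| * |1 - Real.cos (f (rad x))| := by
                rw [abs_mul, abs_mul]
          _ ≤ 1 * |Real.sin (f (rad x))| + 1 * |1 - Real.cos (f (rad x))| :=
              add_le_add (mul_le_mul_of_nonneg_right (hdiv x hx 0) (abs_nonneg _))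
                (mul_le_mul_of_nonneg_right (hdiv2 x hx 1 2) (abs_nonneg _))
          _ = |Real.sin (f (rad x))| + |1 - Real.cos (f (rad x))| := by ring
      simpa using h1
    · -- coordinate 2
      have h2 : Filter.Tendsto (fun x => n x 2) (nhdsWithin 0 {(0 : Fin 3 → ℝ)}ᶜ)
          (nhds 1) := by
        rw [← tendsto_sub_nhds_zero_iff]
        apply squeeze_zero_norm' (a := fun x => |1 - Real.cos (f (rad x))|)
          _ (by simpa using hc.abs)
        filter_upwards [hev] with x hx
        rw [Real.norm_eq_abs, (hn x hx).2.2]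
        have hr := rad_pos x hx
        have hd0 : 0 ≤ x 2 ^ 2 / rad x ^ 2 := by positivity
        have hd1 : x 2 ^ 2 / rad x ^ 2 ≤ 1 := by
          rw [div_le_one (by positivity)]
          calc x 2 ^ 2 = |x 2| ^ 2 := (sq_abs _).symm
            _ ≤ rad x ^ 2 := pow_le_pow_left₀ (abs_nonneg _) (abs_le_rad x 2) 2
        have heq : Real.cos (f (rad x)) + x 2 ^ 2 / rad x ^ 2 * (1 - Real.cos (f (rad x))) - 1
            = (x 2 ^ 2 / rad x ^ 2 - 1) * (1 - Real.cos (f (rad x))) := by ring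
        rw [heq, abs_mul]
        calc |x 2 ^ 2 / rad x ^ 2 - 1| * |1 - Real.cos (f (rad x))|
            ≤ 1 * |1 - Real.cos (f (rad x))| :=
              mul_le_mul_of_nonneg_right (abs_le.mpr ⟨by linarith, by linarith⟩) (abs_nonneg _)
          _ = |1 - Real.cos (f (rad x))| := one_mul _
      simpa using h2
  refine ⟨⟨?_, fun h => ⟨_, key h⟩⟩, key⟩
  rintro ⟨L, hL⟩
  -- ray along the x₃-axis
  set e3 : ℝ → Fin 3 → ℝ := fun t i => if i = 2 then t else 0 with he3
  have he3cont : Continuous e3 := by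
    apply continuous_pi
    intro i
    by_cases h : i = 2
    · simpa [he3, h] using (continuous_id' : Continuous fun t : ℝ => t)
    · simpa [he3, h] using (continuous_const : Continuous fun _ : ℝ => (0:ℝ))
  have he3ne : ∀ t : ℝ, 0 < t → e3 t ≠ 0 := by
    intro t ht h
    have := congrFun h 2
    simp [he3] at this
    exact ht.ne' this
  have hrade3 : ∀ t : ℝ, 0 < t → rad (e3 t) = t := by
    intro t ht
    have e0 : e3 t 0 = 0 := rfl
    have e1' : e3 t 1 = 0 := rfl
    have e2 : e3 t 2 = t := rfl
    have hsum3 : (0:ℝ) ^ 2 + 0 ^ 2 + t ^ 2 = t ^ 2 := by ring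
    rw [rad, Fin.sum_univ_three, e0, e1', e2, hsum3]
    exact Real.sqrt_sq ht.le
  have h3t : Filter.Tendsto e3 (nhdsWithin 0 (Set.Ioi 0))
      (nhdsWithin 0 {(0 : Fin 3 → ℝ)}ᶜ) := by
    rw [tendsto_nhdsWithin_iff]
    constructor
    · have := he3cont.tendsto 0
      have h0 : e3 0 = 0 := by funext i; by_cases h : i = 2 <;> simp [he3, h]
      rw [h0] at this
      exact this.mono_left nhdsWithin_le_nhds
    · filter_upwards [self_mem_nhdsWithin] with t ht
      exact he3ne t ht
  have hL2 : L 2 = 1 := by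
    have hcomp : Filter.Tendsto (fun t => n (e3 t) 2) (nhdsWithin 0 (Set.Ioi 0))
        (nhds (L 2)) := ((continuous_apply (2 : Fin 3)).tendsto L).comp (hL.comp h3t)
    have heq : ∀ᶠ t in nhdsWithin (0:ℝ) (Set.Ioi 0), n (e3 t) 2 = 1 := by
      filter_upwards [self_mem_nhdsWithin] with t ht
      have ht' : (0:ℝ) < t := ht
      rw [(hn _ (he3ne t ht)).2.2, hrade3 t ht]
      show Real.cos (f t) + t ^ 2 / t ^ 2 * (1 - Real.cos (f t)) = 1
      rw [div_self (pow_ne_zero 2 ht'.ne')]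
      ring
    exact tendsto_nhds_unique (Filter.Tendsto.congr' heq hcomp) tendsto_const_nhds
  -- ray along the x₁-axis
  set e1 : ℝ → Fin 3 → ℝ := fun t i => if i = 0 then t else 0 with he1
  have he1cont : Continuous e1 := by
    apply continuous_pi
    intro i
    by_cases h : i = 0
    · simpa [he1, h] using (continuous_id' : Continuous fun t : ℝ => t)
    · simpa [he1, h] using (continuous_const : Continuous fun _ : ℝ => (0:ℝ))
  have he1ne : ∀ t : ℝ, 0 < t → e1 t ≠ 0 := by
    intro t ht h
    have := congrFun h 0
    simp [he1] at this
    exact ht.ne' this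
  have hrade1 : ∀ t : ℝ, 0 < t → rad (e1 t) = t := by
    intro t ht
    have e0 : e1 t 0 = t := rfl
    have e1' : e1 t 1 = 0 := rfl
    have e2 : e1 t 2 = 0 := rfl
    have hsum1 : t ^ 2 + (0:ℝ) ^ 2 + 0 ^ 2 = t ^ 2 := by ring
    rw [rad, Fin.sum_univ_three, e0, e1', e2, hsum1]
    exact Real.sqrt_sq ht.le
  have h1t : Filter.Tendsto e1 (nhdsWithin 0 (Set.Ioi 0))
      (nhdsWithin 0 {(0 : Fin 3 → ℝ)}ᶜ) := by
    rw [tendsto_nhdsWithin_iff]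
    constructor
    · have := he1cont.tendsto 0
      have h0 : e1 0 = 0 := by funext i; by_cases h : i = 0 <;> simp [he1, h]
      rw [h0] at this
      exact this.mono_left nhdsWithin_le_nhds
    · filter_upwards [self_mem_nhdsWithin] with t ht
      exact he1ne t ht
  have hcos1 : Real.cos (f 0) = 1 := by
    have hcomp : Filter.Tendsto (fun t => n (e1 t) 2) (nhdsWithin 0 (Set.Ioi 0))
        (nhds (L 2)) := ((continuous_apply (2 : Fin 3)).tendsto L).comp (hL.comp h1t)
    have heq : ∀ᶠ t in nhdsWithin (0:ℝ) (Set.Ioi 0), n (e1 t) 2 = Real.cos (f t) := by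
      filter_upwards [self_mem_nhdsWithin] with t ht
      rw [(hn _ (he1ne t ht)).2.2, hrade1 t ht]
      show Real.cos (f t) + (0:ℝ) ^ 2 / t ^ 2 * (1 - Real.cos (f t)) = Real.cos (f t)
      ring
    have hcf : Filter.Tendsto (fun t => Real.cos (f t)) (nhdsWithin 0 (Set.Ioi 0))
        (nhds (Real.cos (f 0))) :=
      (Real.continuous_cos.tendsto (f 0)).comp
        (hf0.mono_left (nhdsWithin_mono 0 Set.Ioi_subset_Ici_self))
    have := tendsto_nhds_unique (Filter.Tendsto.congr' heq hcomp) hcf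
    rw [← this, hL2]
  obtain ⟨k, hk⟩ := (Real.cos_eq_one_iff (f 0)).mp hcos1
  exact ⟨k, by rw [← hk]; ring⟩
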